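/- A finite unordered rooted tree τ is self-nested if and only if its DAG reduction R(τ) is a linear DAG, i.e., R(τ) contains a directed path passing through all of its vertices. -/

import Mathlib

/-- A finite rooted tree whose vertices form a finite subset `supp` of `ℕ`.
`par` maps each vertex to its parent; the root is a fixed point of `par`
(so it has no parent), and every vertex reaches the root by iterating `par`
(connectedness / acyclicity). -/
structure FTree where
  supp : Finset ℕ
  root : ℕ
  root_mem : root ∈ supp
  par : ℕ → ℕ
  par_mem : ∀ v ∈ supp, par v ∈ supp
  par_root : par root = root
  reach : ∀ v ∈ supp, ∃ n, par^[n] v = root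

namespace FTree

/-- Depth of a vertex: least number of parent steps needed to reach the root. -/
noncomputable def depth (t : FTree) (v : ℕ) : ℕ :=
  if h : v ∈ t.supp then Nat.find (t.reach v h) else 0

/-- `w` is a (weak) descendant of `v` in `t`. -/
def IsDesc (t : FTree) (v w : ℕ) : Prop :=
  w ∈ t.supp ∧ ∃ n ≤ t.depth w, t.par^[n] w = v

open Classical in
/-- Vertex set of the subtree `t[v]` rooted at `v`. -/
noncomputable def desc (t : FTree) (v : ℕ) : Finset ℕ :=
  t.supp.filter (fun w => t.IsDesc v w)

/-- Height of the subtree `t[v]` rooted at `v`. -/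
noncomputable def heightAt (t : FTree) (v : ℕ) : ℕ :=
  (t.desc v).sup (fun w => t.depth w) - t.depth v

/-- Height of the tree. -/
noncomputable def height (t : FTree) : ℕ := t.heightAt t.root

/-- The set of children of `v` in `t`. -/
def children (t : FTree) (v : ℕ) : Finset ℕ :=
  t.supp.filter (fun w => t.par w = v ∧ w ≠ t.root)

open Classical in
/-- `γ_h(v)`: number of children of `v` whose subtree has height `h`. -/
noncomputable def gam (t : FTree) (v h : ℕ) : ℕ :=
  ((t.children v).filter (fun c => t.heightAt c = h)).card

/-- The subtree of `t` rooted at `v` is isomorphic (as an unordered rooted tree)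
to the subtree of `s` rooted at `w`: a bijection between the vertex sets sending
root to root and commuting with the parent maps (i.e. mapping edges to edges). -/
def SubtreeIso (t : FTree) (v : ℕ) (s : FTree) (w : ℕ) : Prop :=
  ∃ φ : ℕ → ℕ, Set.BijOn φ (t.desc v : Set ℕ) (s.desc w : Set ℕ) ∧ φ v = w ∧
    ∀ x ∈ t.desc v, x ≠ v → φ (t.par x) = s.par (φ x)

/-- Isomorphism of rooted trees. -/
def TreeIso (t s : FTree) : Prop := SubtreeIso t t.root s s.root

/-- A tree is self-nested if any two of its subtrees of the same height
are isomorphic. -/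
def SelfNested (t : FTree) : Prop :=
  ∀ v ∈ t.supp, ∀ w ∈ t.supp, t.heightAt v = t.heightAt w → SubtreeIso t v t w

open Classical in
/-- Height profile entry `ρ_t(h1,h2)`: the multiset (family up to permutation) of
the values `γ_{h2}(v)` over all vertices `v` of `t` with `H(t[v]) = h1`. -/
noncomputable def profile (t : FTree) (h1 h2 : ℕ) : Multiset ℕ :=
  (t.supp.filter (fun v => t.heightAt v = h1)).val.map (fun v => t.gam v h2)

/-- Number of vertices of `t`. -/
def numV (t : FTree) : ℕ := t.supp.card

/-- `a` is a (weak) ancestor of `b`. -/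
def IsAnc (t : FTree) (a b : ℕ) : Prop := ∃ n, t.par^[n] b = a

/-- `a` is a proper ancestor of `b`. -/
def ProperAnc (t : FTree) (a b : ℕ) : Prop := a ≠ b ∧ t.IsAnc a b

/-- `l` is the least common ancestor of `a` and `b`. -/
def IsLCA (t : FTree) (a b l : ℕ) : Prop :=
  l ∈ t.supp ∧ t.IsAnc l a ∧ t.IsAnc l b ∧
    ∀ m ∈ t.supp, t.IsAnc m a → t.IsAnc m b → t.IsAnc m l

/-- `φ`, restricted to the domain `D ⊆ t.supp`, is a constrained mapping in the
sense of Zhang from `t` to `s`: a one-to-one correspondence preserving the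
ancestor order, satisfying moreover Zhang's condition on least common ancestors. -/
def ZhangMapping (t s : FTree) (D : Finset ℕ) (φ : ℕ → ℕ) : Prop :=
  D ⊆ t.supp ∧ (∀ x ∈ D, φ x ∈ s.supp) ∧ Set.InjOn φ (D : Set ℕ) ∧
  (∀ a ∈ D, ∀ b ∈ D, (t.ProperAnc a b ↔ s.ProperAnc (φ a) (φ b))) ∧
  (∀ v1 ∈ D, ∀ v2 ∈ D, ∀ v3 ∈ D, ∀ l l',
    t.IsLCA v1 v2 l → s.IsLCA (φ v1) (φ v2) l' →
    (t.ProperAnc l v3 ↔ s.ProperAnc l' (φ v3)))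

/-- Allowed inserting operation (AI): adding a new internal vertex `w` as a child of
`v`, making `w` the parent of the child `c` of `v`; allowed only if
`H(t[c]) + 1 < H(t[v])`. -/
def InsertAI (t θ : FTree) : Prop :=
  ∃ v c w, v ∈ t.supp ∧ c ∈ t.children v ∧ w ∉ t.supp ∧
    t.heightAt c + 1 < t.heightAt v ∧
    θ.supp = insert w t.supp ∧ θ.root = t.root ∧
    θ.par w = v ∧ θ.par c = w ∧ ∀ x ∈ t.supp, x ≠ c → θ.par x = t.par x

/-- Allowed inserting operation (AS): attaching a tree `s` as a new child subtree of
`v`; allowed only if `H(s) + 1 ≤ H(t[v])`. -/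
def InsertAS (t θ : FTree) : Prop :=
  ∃ (v : ℕ) (s : FTree), v ∈ t.supp ∧ Disjoint s.supp t.supp ∧
    s.height + 1 ≤ t.heightAt v ∧
    θ.supp = t.supp ∪ s.supp ∧ θ.root = t.root ∧ θ.par s.root = v ∧
    (∀ x ∈ t.supp, θ.par x = t.par x) ∧ (∀ x ∈ s.supp, x ≠ s.root → θ.par x = s.par x)

/-- One allowed inserting operation. -/
def InsertStep (t θ : FTree) : Prop := InsertAI t θ ∨ InsertAS t θ

/-- Allowed deleting operation (DI): deleting an internal vertex `v`, child of `u`,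
having a unique child `c` (which becomes a child of `u`); allowed only if `u` has
another child `v'` with `H(t[v']) ≥ H(t[v])`. -/
def DeleteDI (t θ : FTree) : Prop :=
  ∃ u v c, v ∈ t.children u ∧ t.children v = {c} ∧
    (∃ v' ∈ t.children u, v' ≠ v ∧ t.heightAt v ≤ t.heightAt v') ∧
    θ.supp = t.supp.erase v ∧ θ.root = t.root ∧ θ.par c = u ∧
    ∀ x ∈ t.supp, x ≠ v → x ≠ c → θ.par x = t.par x

/-- Allowed deleting operation (DS): deleting the whole subtree rooted at a child `w`
of `v`; allowed only if `v` has another child `w'` with `H(t[w']) + 1 = H(t[v])`. -/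
def DeleteDS (t θ : FTree) : Prop :=
  ∃ v w, w ∈ t.children v ∧
    (∃ w' ∈ t.children v, w' ≠ w ∧ t.heightAt w' + 1 = t.heightAt v) ∧
    θ.supp = t.supp \ t.desc w ∧ θ.root = t.root ∧
    ∀ x ∈ θ.supp, θ.par x = t.par x

/-- One allowed deleting operation. -/
def DeleteStep (t θ : FTree) : Prop := DeleteDI t θ ∨ DeleteDS t θ

/-- A general single-vertex inserting operation: a new vertex `w` is added as a child
of `v`, and the vertices of a subset `C` of the children of `v` become children of `w`. -/
def GeneralInsert (t θ : FTree) : Prop :=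
  ∃ (v w : ℕ) (C : Finset ℕ), v ∈ t.supp ∧ w ∉ t.supp ∧ C ⊆ t.children v ∧
    θ.supp = insert w t.supp ∧ θ.root = t.root ∧ θ.par w = v ∧
    (∀ x ∈ C, θ.par x = w) ∧ ∀ x ∈ t.supp, x ∉ C → θ.par x = t.par x

/-- Cost of a constrained mapping with domain `D`: vertices of `t` not in the domain
are deleted, vertices of `s` not in the image are inserted (unit costs). -/
def mappingCost (t s : FTree) (D : Finset ℕ) (φ : ℕ → ℕ) : ℕ :=
  (t.numV - D.card) + (s.numV - (D.image φ).card)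

/-- Zhang's constrained edit distance between unordered trees: the minimal cost
associated with a constrained mapping between `t` and `s`. -/
noncomputable def DZ (t s : FTree) : ℕ :=
  sInf { c | ∃ (D : Finset ℕ) (φ : ℕ → ℕ), ZhangMapping t s D φ ∧ c = mappingCost t s D φ }

end FTree

namespace FTree

variable (t : FTree)

lemma iter_par_mem {v : ℕ} (hv : v ∈ t.supp) : ∀ n, t.par^[n] v ∈ t.supp := by
  intro n; induction n with
  | zero => simpa
  | succ n ih => rw [Function.iterate_succ_apply']; exact t.par_mem _ ih

lemma iter_par_root : ∀ n, t.par^[n] t.root = t.root := by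
  intro n; induction n with
  | zero => rfl
  | succ n ih => rw [Function.iterate_succ_apply', ih, t.par_root]

lemma depth_spec {v : ℕ} (hv : v ∈ t.supp) : t.par^[t.depth v] v = t.root := by
  rw [depth, dif_pos hv]; exact Nat.find_spec (t.reach v hv)

lemma depth_min {v : ℕ} (hv : v ∈ t.supp) {n : ℕ} (h : t.par^[n] v = t.root) :
    t.depth v ≤ n := by
  rw [depth, dif_pos hv]; exact Nat.find_le h

lemma depth_root : t.depth t.root = 0 :=
  Nat.le_zero.1 (t.depth_min t.root_mem rfl)

lemma depth_eq_zero {v : ℕ} (hv : v ∈ t.supp) (h : t.depth v = 0) : v = t.root := by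
  have := t.depth_spec hv; rwa [h] at this

lemma depth_eq_of_iter {v w n : ℕ} (hw : w ∈ t.supp) (hn : n ≤ t.depth w)
    (h : t.par^[n] w = v) : v ∈ t.supp ∧ t.depth w = n + t.depth v := by
  have hv : v ∈ t.supp := h ▸ t.iter_par_mem hw n
  refine ⟨hv, ?_⟩
  have h1 : t.depth w ≤ t.depth v + n := by
    apply t.depth_min hw
    rw [Function.iterate_add_apply, h]
    exact t.depth_spec hv
  have h2 : t.depth v ≤ t.depth w - n := by
    apply t.depth_min hv
    rw [← h, ← Function.iterate_add_apply]
    have he : t.depth w - n + n = t.depth w := by omega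
    rw [he]; exact t.depth_spec hw
  omega

lemma mem_desc_iff {v w : ℕ} : w ∈ t.desc v ↔
    w ∈ t.supp ∧ t.depth v ≤ t.depth w ∧ t.par^[t.depth w - t.depth v] w = v := by
  classical
  unfold desc; rw [Finset.mem_filter]; simp only [IsDesc]
  constructor
  · rintro ⟨hw, -, n, hn, h⟩
    obtain ⟨hv, hd⟩ := t.depth_eq_of_iter hw hn h
    refine ⟨hw, by omega, ?_⟩
    have he : t.depth w - t.depth v = n := by omega
    rw [he]; exact h
  · rintro ⟨hw, hle, h⟩
    exact ⟨hw, hw, _, Nat.sub_le _ _, h⟩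

lemma mem_supp_of_mem_desc {v w : ℕ} (h : w ∈ t.desc v) : w ∈ t.supp :=
  (t.mem_desc_iff.1 h).1

lemma root_of_mem_desc {v w : ℕ} (h : w ∈ t.desc v) : v ∈ t.supp := by
  obtain ⟨hw, -, hi⟩ := t.mem_desc_iff.1 h
  exact hi ▸ t.iter_par_mem hw _

lemma self_mem_desc {v : ℕ} (hv : v ∈ t.supp) : v ∈ t.desc v :=
  t.mem_desc_iff.2 ⟨hv, le_rfl, by simp⟩

lemma mem_desc_root {v : ℕ} (hv : v ∈ t.supp) : v ∈ t.desc t.root :=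
  t.mem_desc_iff.2 ⟨hv, by rw [t.depth_root]; omega,
    by rw [t.depth_root, Nat.sub_zero]; exact t.depth_spec hv⟩

lemma par_mem_desc {v w : ℕ} (h : w ∈ t.desc v) (hne : w ≠ v) :
    t.par w ∈ t.desc v ∧ t.depth (t.par w) + 1 = t.depth w := by
  obtain ⟨hw, hle, hi⟩ := t.mem_desc_iff.1 h
  have hv := t.root_of_mem_desc h
  have hn1 : 1 ≤ t.depth w - t.depth v := by
    rcases Nat.eq_zero_or_pos (t.depth w - t.depth v) with h0 | h1
    · exfalso; apply hne; rw [← hi, h0]; rfl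
    · exact h1
  have hp : t.par w ∈ t.supp := t.par_mem w hw
  have hd1 : 1 ≤ t.depth w := by omega
  have hle' : t.depth (t.par w) ≤ t.depth w - 1 := by
    apply t.depth_min hp
    rw [← Function.iterate_succ_apply]
    have he : (t.depth w - 1).succ = t.depth w := by omega
    rw [he]; exact t.depth_spec hw
  have hge : t.depth w ≤ t.depth (t.par w) + 1 := by
    apply t.depth_min hw
    rw [Function.iterate_succ_apply]
    exact t.depth_spec hp
  have hdp : t.depth (t.par w) + 1 = t.depth w := by omega
  refine ⟨t.mem_desc_iff.2 ⟨hp, by omega, ?_⟩, hdp⟩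
  have hiter : t.par^[t.depth w - t.depth v - 1] (t.par w) = v := by
    rw [← Function.iterate_succ_apply]
    have he : (t.depth w - t.depth v - 1).succ = t.depth w - t.depth v := by omega
    rw [he]; exact hi
  have he2 : t.depth (t.par w) - t.depth v = t.depth w - t.depth v - 1 := by omega
  rw [he2]; exact hiter

lemma desc_subset {v w : ℕ} (h : w ∈ t.desc v) : t.desc w ⊆ t.desc v := by
  intro x hx
  obtain ⟨hw, hle, hi⟩ := t.mem_desc_iff.1 h
  obtain ⟨hxs, hxle, hxi⟩ := t.mem_desc_iff.1 hx
  refine t.mem_desc_iff.2 ⟨hxs, by omega, ?_⟩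
  have he : t.depth x - t.depth v = (t.depth w - t.depth v) + (t.depth x - t.depth w) := by
    omega
  rw [he, Function.iterate_add_apply, hxi, hi]

lemma heightAt_eq_sup {v : ℕ} :
    t.heightAt v = (t.desc v).sup (fun w => t.depth w - t.depth v) := by
  rcases (t.desc v).eq_empty_or_nonempty with he | hne
  · rw [heightAt, he]; simp
  · rw [heightAt]
    obtain ⟨w, hw, hsup⟩ := Finset.exists_mem_eq_sup _ hne (fun w => t.depth w)
    apply le_antisymm
    · rw [hsup]
      exact Finset.le_sup (f := fun w => t.depth w - t.depth v) hw
    · apply Finset.sup_le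
      intro x hx
      exact Nat.sub_le_sub_right (Finset.le_sup (f := fun w => t.depth w) hx) _

lemma reldepth_le_heightAt {v w : ℕ} (h : w ∈ t.desc v) :
    t.depth w - t.depth v ≤ t.heightAt v := by
  rw [t.heightAt_eq_sup]
  exact Finset.le_sup (f := fun w => t.depth w - t.depth v) h

lemma exists_depth_eq_heightAt {v : ℕ} (hv : v ∈ t.supp) :
    ∃ w ∈ t.desc v, t.depth w = t.depth v + t.heightAt v := by
  obtain ⟨w, hw, hsup⟩ :=
    Finset.exists_mem_eq_sup _ ⟨v, t.self_mem_desc hv⟩ (fun w => t.depth w - t.depth v)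
  refine ⟨w, hw, ?_⟩
  have hle := (t.mem_desc_iff.1 hw).2.1
  rw [t.heightAt_eq_sup, hsup]; omega

lemma children_spec {v c : ℕ} (h : c ∈ t.children v) :
    c ∈ t.supp ∧ c ∈ t.desc v ∧ t.depth c = t.depth v + 1 ∧ v ∈ t.supp := by
  obtain ⟨hc, hpar, hroot⟩ : c ∈ t.supp ∧ t.par c = v ∧ c ≠ t.root := by
    simpa [children] using h
  have hv : v ∈ t.supp := hpar ▸ t.par_mem c hc
  have hd1 : 1 ≤ t.depth c := by
    rcases Nat.eq_zero_or_pos (t.depth c) with h0 | h1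
    · exact absurd (t.depth_eq_zero hc h0) hroot
    · exact h1
  have hle : t.depth c ≤ t.depth v + 1 := by
    apply t.depth_min hc
    rw [Function.iterate_succ_apply, hpar]
    exact t.depth_spec hv
  have hge : t.depth v ≤ t.depth c - 1 := by
    apply t.depth_min hv
    rw [← hpar, ← Function.iterate_succ_apply]
    have he : (t.depth c - 1).succ = t.depth c := by omega
    rw [he]; exact t.depth_spec hc
  have hd : t.depth c = t.depth v + 1 := by omega
  refine ⟨hc, t.mem_desc_iff.2 ⟨hc, by omega, ?_⟩, hd, hv⟩
  have he : t.depth c - t.depth v = 1 := by omega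
  rw [he]; simpa using hpar

lemma heightAt_child_add_one_le {v c : ℕ} (h : c ∈ t.children v) :
    t.heightAt c + 1 ≤ t.heightAt v := by
  obtain ⟨hc, hcd, hd, -⟩ := t.children_spec h
  obtain ⟨w, hw, hwd⟩ := t.exists_depth_eq_heightAt hc
  have hwv : w ∈ t.desc v := t.desc_subset hcd hw
  have h1 := t.reldepth_le_heightAt hwv
  have h2 := (t.mem_desc_iff.1 hw).2.1
  omega

lemma iter_par_mem_desc {v w : ℕ} (h : w ∈ t.desc v) :
    ∀ k, k ≤ t.depth w - t.depth v →
      t.par^[k] w ∈ t.desc v ∧ t.depth (t.par^[k] w) + k = t.depth w := by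
  intro k
  induction k with
  | zero => intro _; exact ⟨h, rfl⟩
  | succ k ih =>
    intro hk
    obtain ⟨hm, hd⟩ := ih (by omega)
    have hlev := (t.mem_desc_iff.1 h).2.1
    have hne : t.par^[k] w ≠ v := by
      intro he; rw [he] at hd; omega
    obtain ⟨hm', hd'⟩ := t.par_mem_desc hm hne
    rw [Function.iterate_succ_apply']
    exact ⟨hm', by omega⟩

lemma exists_child_heightAt {v : ℕ} (hv : v ∈ t.supp) (h1 : 1 ≤ t.heightAt v) :
    ∃ c ∈ t.children v, t.heightAt c + 1 = t.heightAt v := by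
  classical
  obtain ⟨w, hw, hwd⟩ := t.exists_depth_eq_heightAt hv
  have hle : t.depth v ≤ t.depth w := (t.mem_desc_iff.1 hw).2.1
  obtain ⟨hcm, hcd⟩ := t.iter_par_mem_desc hw (t.heightAt v - 1) (by omega)
  set c := t.par^[t.heightAt v - 1] w with hcdef
  have hcsupp : c ∈ t.supp := t.mem_supp_of_mem_desc hcm
  have hdc : t.depth c = t.depth v + 1 := by omega
  have hpc : t.par c = v := by
    have hiter := (t.mem_desc_iff.1 hcm).2.2
    rw [hdc] at hiter
    simpa using hiter
  have hcr : c ≠ t.root := by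
    intro he; rw [he, t.depth_root] at hdc; omega
  have hcc : c ∈ t.children v := by
    simp only [children, Finset.mem_filter]
    exact ⟨hcsupp, hpc, hcr⟩
  refine ⟨c, hcc, ?_⟩
  have hub := t.heightAt_child_add_one_le hcc
  have hwc : w ∈ t.desc c := by
    refine t.mem_desc_iff.2 ⟨t.mem_supp_of_mem_desc hw, by omega, ?_⟩
    have he : t.depth w - t.depth c = t.heightAt v - 1 := by omega
    rw [he]
  have hlb := t.reldepth_le_heightAt hwc
  omega

lemma heightAt_le_height {v : ℕ} (hv : v ∈ t.supp) : t.heightAt v ≤ t.height := by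
  rw [height]
  obtain ⟨w, hw, hwd⟩ := t.exists_depth_eq_heightAt hv
  have hwr : w ∈ t.desc t.root := t.mem_desc_root (t.mem_supp_of_mem_desc hw)
  have h2 := t.reldepth_le_heightAt hwr
  rw [t.depth_root] at h2
  omega

lemma subtreeIso_refl (v : ℕ) : SubtreeIso t v t v :=
  ⟨id, Set.bijOn_id _, rfl, fun _ _ _ => rfl⟩

lemma iso_comm_iter {v : ℕ} {φ : ℕ → ℕ}
    (hcomm : ∀ x ∈ t.desc v, x ≠ v → φ (t.par x) = t.par (φ x)) :
    ∀ x ∈ t.desc v, ∀ k, k ≤ t.depth x - t.depth v → φ (t.par^[k] x) = t.par^[k] (φ x) := by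
  intro x hx k
  induction k with
  | zero => intro _; rfl
  | succ k ih =>
    intro hk
    obtain ⟨hm, hd⟩ := t.iter_par_mem_desc hx k (by omega)
    have hlev := (t.mem_desc_iff.1 hx).2.1
    have hne : t.par^[k] x ≠ v := by
      intro he; rw [he] at hd; omega
    rw [Function.iterate_succ_apply', Function.iterate_succ_apply',
      hcomm _ hm hne, ih (by omega)]

lemma iso_reldepth_le {v w : ℕ} {φ : ℕ → ℕ}
    (hmap : Set.MapsTo φ (t.desc v : Set ℕ) (t.desc w : Set ℕ))
    (hroot : φ v = w)
    (hcomm : ∀ x ∈ t.desc v, x ≠ v → φ (t.par x) = t.par (φ x)) :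
    ∀ x ∈ t.desc v, t.depth (φ x) - t.depth w ≤ t.depth x - t.depth v := by
  intro x hx
  have hfx : φ x ∈ t.desc w := by
    have := hmap (Finset.mem_coe.2 hx); exact Finset.mem_coe.1 this
  have h1 : t.par^[t.depth x - t.depth v] (φ x) = w := by
    rw [← t.iso_comm_iter hcomm x hx _ le_rfl, (t.mem_desc_iff.1 hx).2.2, hroot]
  have hw' : w ∈ t.supp := t.root_of_mem_desc hfx
  have h2 : t.depth (φ x) ≤ t.depth w + (t.depth x - t.depth v) := by
    apply t.depth_min (t.mem_supp_of_mem_desc hfx)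
    rw [Function.iterate_add_apply, h1]
    exact t.depth_spec hw'
  omega

lemma subtreeIso_symm {v w : ℕ} (hv : v ∈ t.supp) (h : SubtreeIso t v t w) :
    SubtreeIso t w t v := by
  obtain ⟨φ, hbij, hroot, hcomm⟩ := h
  have hvd : v ∈ t.desc v := t.self_mem_desc hv
  have hinv : Set.InvOn (Function.invFunOn φ (t.desc v : Set ℕ)) φ
      (t.desc v : Set ℕ) (t.desc w : Set ℕ) := hbij.invOn_invFunOn
  set ψ := Function.invFunOn φ (t.desc v : Set ℕ) with hψ
  refine ⟨ψ, hbij.symm hinv.symm, ?_, ?_⟩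
  · have h0 : ψ (φ v) = v := hinv.1 (Finset.mem_coe.2 hvd)
    rwa [hroot] at h0
  · intro y hy hyw
    obtain ⟨x, hx, hfx⟩ := hbij.surjOn (Finset.mem_coe.2 hy)
    have hxF : x ∈ t.desc v := Finset.mem_coe.1 hx
    have hψy : ψ y = x := by rw [← hfx]; exact hinv.1 hx
    have hxv : x ≠ v := fun he => hyw (by rw [← hfx, he, hroot])
    obtain ⟨hpx, -⟩ := t.par_mem_desc hxF hxv
    have h2 : φ (t.par x) = t.par y := by rw [hcomm x hxF hxv, hfx]
    have h3 : ψ (t.par y) = t.par x := by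
      rw [← h2]; exact hinv.1 (Finset.mem_coe.2 hpx)
    rw [h3, hψy]

lemma subtreeIso_trans {u v w : ℕ} (h1 : SubtreeIso t u t v) (h2 : SubtreeIso t v t w) :
    SubtreeIso t u t w := by
  obtain ⟨φ, hb1, hr1, hc1⟩ := h1
  obtain ⟨γ, hb2, hr2, hc2⟩ := h2
  refine ⟨γ ∘ φ, hb2.comp hb1, by simp [hr1, hr2], ?_⟩
  intro x hx hxu
  have hu : u ∈ t.supp := t.root_of_mem_desc hx
  have hud : u ∈ t.desc u := t.self_mem_desc hu
  have hfx : φ x ∈ t.desc v := by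
    have := hb1.mapsTo (Finset.mem_coe.2 hx); exact Finset.mem_coe.1 this
  have hfxv : φ x ≠ v := by
    intro he
    exact hxu (hb1.injOn (Finset.mem_coe.2 hx) (Finset.mem_coe.2 hud) (by rw [he, hr1]))
  simp only [Function.comp_apply]
  rw [hc1 x hx hxu, hc2 _ hfx hfxv]

lemma heightAt_eq_of_iso {v w : ℕ} (hv : v ∈ t.supp) (h : SubtreeIso t v t w) :
    t.heightAt v = t.heightAt w := by
  have key : ∀ (v' w' : ℕ), SubtreeIso t v' t w' → t.heightAt w' ≤ t.heightAt v' := by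
    rintro v' w' ⟨φ, hbij, hroot, hcomm⟩
    rw [t.heightAt_eq_sup (v := w')]
    apply Finset.sup_le
    intro y hy
    obtain ⟨x, hx, hfx⟩ := hbij.surjOn (Finset.mem_coe.2 hy)
    have hxF : x ∈ t.desc v' := Finset.mem_coe.1 hx
    calc t.depth y - t.depth w' = t.depth (φ x) - t.depth w' := by rw [hfx]
      _ ≤ t.depth x - t.depth v' := t.iso_reldepth_le hbij.mapsTo hroot hcomm x hxF
      _ ≤ t.heightAt v' := t.reldepth_le_heightAt hxF
  exact le_antisymm (key _ _ (t.subtreeIso_symm hv h)) (key _ _ h)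

lemma forward_build : ∀ (n : ℕ) (v : ℕ), v ∈ t.supp → t.heightAt v = n →
    ∃ L : List ℕ, L.head? = some v ∧ (∀ x ∈ L, x ∈ t.supp) ∧
      L.map t.heightAt = (List.range (n+1)).reverse ∧
      L.Chain' (fun a b => b ∈ t.children a) := by
  intro n
  induction n with
  | zero =>
    intro v hv hh
    exact ⟨[v], rfl, by simp [hv], by rw [show List.range 1 = [0] from rfl]; simp [hh], List.isChain_singleton _⟩
  | succ n ih =>
    intro v hv hh
    obtain ⟨c, hc, hch⟩ := t.exists_child_heightAt hv (by omega)
    obtain ⟨L, hLh, hLm, hLmap, hLch⟩ := ih c (t.children_spec hc).1 (by omega)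
    refine ⟨v :: L, rfl, ?_, ?_, ?_⟩
    · intro x hx
      rcases List.mem_cons.1 hx with h | h
      · exact h ▸ hv
      · exact hLm x h
    · rw [List.map_cons, hLmap, hh]
      simp [List.range_succ]
    · refine List.isChain_cons.2 ?_
      refine ⟨?_, hLch⟩
      intro y hy
      rw [hLh] at hy
      have : y = c := by simpa [Option.mem_def, eq_comm] using hy
      exact this ▸ hc

end FTree

/-- A finite unordered rooted tree is self-nested if and only if its DAG
reduction is a linear DAG, i.e. there is a directed path through all its vertices.
The vertices of the DAG reduction are the isomorphism classes of subtrees of `t`; they are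
represented here by a list `L` of vertices of `t` that are pairwise non-isomorphic subtree
roots and such that every subtree of `t` is isomorphic to a subtree rooted in `L`
(so `L` enumerates the DAG vertices exactly once). A directed path through all DAG vertices
is a consecutive chain for the DAG edge relation: there is an edge from the class of `a` to
the class of `b` when some tree of the class of `a` has a subtree of the class of `b` rooted
at a child of its root. -/
theorem selfNested_iff_linear_dag (t : FTree) :
    t.SelfNested ↔
      ∃ L : List ℕ, (∀ x ∈ L, x ∈ t.supp) ∧
        L.Pairwise (fun a b => ¬ FTree.SubtreeIso t a t b) ∧
        (∀ v ∈ t.supp, ∃ x ∈ L, FTree.SubtreeIso t v t x) ∧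
        L.Chain' (fun a b => ∃ v ∈ t.supp, FTree.SubtreeIso t v t a ∧
          ∃ w ∈ t.children v, FTree.SubtreeIso t w t b) := by

  constructor
  · intro hsn
    obtain ⟨L, -, hLm, hLmap, hLch⟩ := t.forward_build t.height t.root t.root_mem rfl
    refine ⟨L, hLm, ?_, ?_, ?_⟩
    · have hp : L.Pairwise (fun a b => t.heightAt b < t.heightAt a) := by
        have hmp : (L.map t.heightAt).Pairwise (fun a b => b < a) := by
          rw [hLmap]
          exact List.pairwise_reverse.2 List.pairwise_lt_range
        exact List.pairwise_map.1 hmp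
      refine hp.imp_of_mem ?_
      intro a b ha hb hlt hiso
      have := t.heightAt_eq_of_iso (hLm a ha) hiso
      omega
    · intro v hv
      have hle := t.heightAt_le_height hv
      have hmem : t.heightAt v ∈ L.map t.heightAt := by
        rw [hLmap, List.mem_reverse, List.mem_range]
        omega
      obtain ⟨x, hxL, hxh⟩ := List.mem_map.1 hmem
      exact ⟨x, hxL, hsn v hv x (hLm x hxL) hxh.symm⟩
    · refine hLch.imp ?_
      intro a b hab
      have haS : a ∈ t.supp := (t.children_spec hab).2.2.2
      exact ⟨a, haS, t.subtreeIso_refl a, b, hab, t.subtreeIso_refl b⟩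
  · rintro ⟨L, hLm, hLp, hcov, hch⟩ v hv w hw hvw
    obtain ⟨x, hxL, hx⟩ := hcov v hv
    obtain ⟨y, hyL, hy⟩ := hcov w hw
    have hxh : t.heightAt v = t.heightAt x := t.heightAt_eq_of_iso hv hx
    have hyh : t.heightAt w = t.heightAt y := t.heightAt_eq_of_iso hw hy
    have hxy : x = y := by
      by_contra hne
      have hchlt : L.Chain' (fun a b => t.heightAt b < t.heightAt a) := by
        refine hch.imp ?_
        rintro a b ⟨v', hv', hva, w', hw', hwb⟩
        have h1 : t.heightAt v' = t.heightAt a := t.heightAt_eq_of_iso hv' hva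
        have h2 : t.heightAt w' = t.heightAt b :=
          t.heightAt_eq_of_iso (t.children_spec hw').1 hwb
        have h3 := t.heightAt_child_add_one_le hw'
        omega
      have hmap : (L.map t.heightAt).Chain' (· > ·) :=
        (List.isChain_map _).2 hchlt
      have hpw : (L.map t.heightAt).Pairwise (· > ·) :=
        List.isChain_iff_pairwise.1 hmap
      have hplt : L.Pairwise (fun a b => t.heightAt b < t.heightAt a) :=
        List.pairwise_map.1 hpw
      have hpne : L.Pairwise (fun a b => t.heightAt a ≠ t.heightAt b) :=
        hplt.imp (fun h => by omega)
      have hsym : Symmetric (fun a b : ℕ => t.heightAt a ≠ t.heightAt b) :=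
        fun a b h => h.symm
      haveI : Std.Symm (fun a b : ℕ => t.heightAt a ≠ t.heightAt b) := ⟨fun a b h => hsym h⟩
      exact (hpne.forall hxL hyL hne) (by omega)
    subst hxy
    exact t.subtreeIso_trans hx (t.subtreeIso_symm hw hy)
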